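/- For integers n, m ≥ 3, the F-index of the vertex Q-join of the cycle C_n and the cycle C_m is F(C_n ∨̇_Q C_m) = mn(m² + n²) + 6mn(m + n) + 24mn + 8m + 72n. -/

import Mathlib

/-- The subdivision graph `S(G)`: a new vertex is inserted into each edge of `G`
(each edge is replaced by a path of length 2). The inserted vertices form the
right summand `↥G.edgeSet`. -/
def Sgraph {V : Type*} (G : SimpleGraph V) : SimpleGraph (V ⊕ ↥G.edgeSet) where
  Adj x y :=
    match x, y with
    | Sum.inl v, Sum.inr e => v ∈ (e : Sym2 V)
    | Sum.inr e, Sum.inl v => v ∈ (e : Sym2 V)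
    | _, _ => False
  symm := by constructor; rintro (v | e) (w | f) h <;> exact h
  loopless := by constructor; rintro (v | e) h <;> exact h

/-- The graph `R(G)`: obtained from `G` by inserting a new vertex into each edge of `G`
and joining each new vertex to the end vertices of its corresponding edge. -/
def Rgraph {V : Type*} (G : SimpleGraph V) : SimpleGraph (V ⊕ ↥G.edgeSet) where
  Adj x y :=
    match x, y with
    | Sum.inl v, Sum.inl w => G.Adj v w
    | Sum.inl v, Sum.inr e => v ∈ (e : Sym2 V)
    | Sum.inr e, Sum.inl v => v ∈ (e : Sym2 V)
    | Sum.inr _, Sum.inr _ => False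
  symm := by
    constructor
    rintro (v | e) (w | f) h
    · exact G.adj_symm h
    · exact h
    · exact h
    · exact h
  loopless := by
    constructor
    rintro (v | e) h
    · exact G.irrefl h
    · exact h

/-- The graph `Q(G)`: obtained from `G` by inserting a new vertex into each edge of `G`,
then joining by edges those pairs of new vertices lying on adjacent edges of `G`. -/
def Qgraph {V : Type*} (G : SimpleGraph V) : SimpleGraph (V ⊕ ↥G.edgeSet) where
  Adj x y :=
    match x, y with
    | Sum.inl _, Sum.inl _ => False
    | Sum.inl v, Sum.inr e => v ∈ (e : Sym2 V)
    | Sum.inr e, Sum.inl v => v ∈ (e : Sym2 V)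
    | Sum.inr e, Sum.inr f => e ≠ f ∧ ∃ v, v ∈ (e : Sym2 V) ∧ v ∈ (f : Sym2 V)
  symm := by
    constructor
    rintro (v | e) (w | f) h
    · exact h
    · exact h
    · exact h
    · exact ⟨h.1.symm, by obtain ⟨v, h1, h2⟩ := h.2; exact ⟨v, h2, h1⟩⟩
  loopless := by
    constructor
    rintro (v | e) h
    · exact h
    · exact h.1 rfl

/-- The total graph `T(G)`: obtained from `G` by inserting a new vertex into each edge,
joining each new vertex to the end vertices of its corresponding edge, and joining by
edges those pairs of new vertices lying on adjacent edges of `G`. -/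
def Tgraph {V : Type*} (G : SimpleGraph V) : SimpleGraph (V ⊕ ↥G.edgeSet) where
  Adj x y :=
    match x, y with
    | Sum.inl v, Sum.inl w => G.Adj v w
    | Sum.inl v, Sum.inr e => v ∈ (e : Sym2 V)
    | Sum.inr e, Sum.inl v => v ∈ (e : Sym2 V)
    | Sum.inr e, Sum.inr f => e ≠ f ∧ ∃ v, v ∈ (e : Sym2 V) ∧ v ∈ (f : Sym2 V)
  symm := by
    constructor
    rintro (v | e) (w | f) h
    · exact G.adj_symm h
    · exact h
    · exact h
    · exact ⟨h.1.symm, by obtain ⟨v, h1, h2⟩ := h.2; exact ⟨v, h2, h1⟩⟩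
  loopless := by
    constructor
    rintro (v | e) h
    · exact G.irrefl h
    · exact h.1 rfl

/-- The disjoint union of `H` and `K` together with all edges joining a vertex `a` of `H`
with `P a` to every vertex of `K`. -/
def joinOn {A B : Type*} (H : SimpleGraph A) (K : SimpleGraph B) (P : A → Prop) :
    SimpleGraph (A ⊕ B) where
  Adj x y :=
    match x, y with
    | Sum.inl a, Sum.inl a' => H.Adj a a'
    | Sum.inr b, Sum.inr b' => K.Adj b b'
    | Sum.inl a, Sum.inr _ => P a
    | Sum.inr _, Sum.inl a => P a
  symm := by
    constructor
    rintro (a | b) (a' | b') h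
    · exact H.adj_symm h
    · exact h
    · exact h
    · exact K.adj_symm h
  loopless := by
    constructor
    rintro (a | b) h
    · exact H.irrefl h
    · exact K.irrefl h

/-- The vertex S-join `G₁ ∨̇_S G₂`: obtained from `S(G₁)` and `G₂` by joining each vertex
of `V(G₁)` to every vertex of `G₂`. -/
def vertexSJoin {V₁ V₂ : Type*} (G₁ : SimpleGraph V₁) (G₂ : SimpleGraph V₂) :
    SimpleGraph ((V₁ ⊕ ↥G₁.edgeSet) ⊕ V₂) :=
  joinOn (Sgraph G₁) G₂ (fun x => x.isLeft)

/-- The edge S-join `G₁ ∨̱_S G₂`: obtained from `S(G₁)` and `G₂` by joining each inserted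
vertex (each vertex of `I(G₁)`) to every vertex of `G₂`. -/
def edgeSJoin {V₁ V₂ : Type*} (G₁ : SimpleGraph V₁) (G₂ : SimpleGraph V₂) :
    SimpleGraph ((V₁ ⊕ ↥G₁.edgeSet) ⊕ V₂) :=
  joinOn (Sgraph G₁) G₂ (fun x => x.isRight)

/-- The vertex R-join `G₁ ∨̇_R G₂`. -/
def vertexRJoin {V₁ V₂ : Type*} (G₁ : SimpleGraph V₁) (G₂ : SimpleGraph V₂) :
    SimpleGraph ((V₁ ⊕ ↥G₁.edgeSet) ⊕ V₂) :=
  joinOn (Rgraph G₁) G₂ (fun x => x.isLeft)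

/-- The edge R-join `G₁ ∨̱_R G₂`. -/
def edgeRJoin {V₁ V₂ : Type*} (G₁ : SimpleGraph V₁) (G₂ : SimpleGraph V₂) :
    SimpleGraph ((V₁ ⊕ ↥G₁.edgeSet) ⊕ V₂) :=
  joinOn (Rgraph G₁) G₂ (fun x => x.isRight)

/-- The vertex Q-join `G₁ ∨̇_Q G₂`. -/
def vertexQJoin {V₁ V₂ : Type*} (G₁ : SimpleGraph V₁) (G₂ : SimpleGraph V₂) :
    SimpleGraph ((V₁ ⊕ ↥G₁.edgeSet) ⊕ V₂) :=
  joinOn (Qgraph G₁) G₂ (fun x => x.isLeft)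

/-- The edge Q-join `G₁ ∨̱_Q G₂`. -/
def edgeQJoin {V₁ V₂ : Type*} (G₁ : SimpleGraph V₁) (G₂ : SimpleGraph V₂) :
    SimpleGraph ((V₁ ⊕ ↥G₁.edgeSet) ⊕ V₂) :=
  joinOn (Qgraph G₁) G₂ (fun x => x.isRight)

/-- The vertex T-join `G₁ ∨̇_T G₂`. -/
def vertexTJoin {V₁ V₂ : Type*} (G₁ : SimpleGraph V₁) (G₂ : SimpleGraph V₂) :
    SimpleGraph ((V₁ ⊕ ↥G₁.edgeSet) ⊕ V₂) :=
  joinOn (Tgraph G₁) G₂ (fun x => x.isLeft)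

/-- The edge T-join `G₁ ∨̱_T G₂`. -/
def edgeTJoin {V₁ V₂ : Type*} (G₁ : SimpleGraph V₁) (G₂ : SimpleGraph V₂) :
    SimpleGraph ((V₁ ⊕ ↥G₁.edgeSet) ⊕ V₂) :=
  joinOn (Tgraph G₁) G₂ (fun x => x.isRight)

/-- Degree of a vertex in a graph on a finite vertex type. -/
noncomputable def gdeg {V : Type*} [Finite V] (G : SimpleGraph V) (v : V) : ℕ :=
  haveI : Fintype ↥(G.neighborSet v) := Fintype.ofFinite _
  G.degree v

/-- The forgotten topological index (F-index): `F(G) = ∑_{v ∈ V(G)} d_G(v)³`. -/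
noncomputable def Findex {V : Type*} [Finite V] (G : SimpleGraph V) : ℕ :=
  haveI := Fintype.ofFinite V
  ∑ v : V, gdeg G v ^ 3

/-- The first Zagreb index: `M₁(G) = ∑_{v ∈ V(G)} d_G(v)²`. -/
noncomputable def M1 {V : Type*} [Finite V] (G : SimpleGraph V) : ℕ :=
  haveI := Fintype.ofFinite V
  ∑ v : V, gdeg G v ^ 2

/-- `M₄(G) = ∑_{v ∈ V(G)} d_G(v)⁴`. -/
noncomputable def M4 {V : Type*} [Finite V] (G : SimpleGraph V) : ℕ :=
  haveI := Fintype.ofFinite V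
  ∑ v : V, gdeg G v ^ 4

/-- The hyper Zagreb index: `HM(G) = ∑_{uv ∈ E(G)} (d_G(u) + d_G(v))²`. -/
noncomputable def HM {V : Type*} [Finite V] (G : SimpleGraph V) : ℕ :=
  haveI : Fintype ↥G.edgeSet := Fintype.ofFinite _
  ∑ e : ↥G.edgeSet,
    Sym2.lift ⟨fun u v => (gdeg G u + gdeg G v) ^ 2,
      fun u v => by dsimp only; rw [add_comm]⟩ (e : Sym2 V)

/-- The redefined Zagreb index:
`ReZM(G) = ∑_{uv ∈ E(G)} d_G(u) d_G(v) (d_G(u) + d_G(v))`. -/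
noncomputable def ReZM {V : Type*} [Finite V] (G : SimpleGraph V) : ℕ :=
  haveI : Fintype ↥G.edgeSet := Fintype.ofFinite _
  ∑ e : ↥G.edgeSet,
    Sym2.lift ⟨fun u v => gdeg G u * gdeg G v * (gdeg G u + gdeg G v),
      fun u v => by dsimp only; ring⟩ (e : Sym2 V)

/-- The number of edges of `G`. -/
noncomputable def numEdges {V : Type*} (G : SimpleGraph V) : ℕ :=
  Nat.card ↥G.edgeSet


section AuxFindex
open SimpleGraph

set_option linter.unusedSectionVars false

lemma gdeg_eq_ncard {V : Type*} [Finite V] (G : SimpleGraph V) (v : V) :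
    gdeg G v = Nat.card (G.neighborSet v) := by
  letI : Fintype ↥(G.neighborSet v) := Fintype.ofFinite _
  unfold gdeg
  rw [← SimpleGraph.card_neighborSet_eq_degree]
  exact Nat.card_eq_fintype_card.symm

lemma gdeg_eq_degree {V : Type*} [Finite V] (G : SimpleGraph V) (v : V)
    [Fintype ↥(G.neighborSet v)] : gdeg G v = G.degree v := by
  rw [gdeg_eq_ncard, ← SimpleGraph.card_neighborSet_eq_degree, Nat.card_eq_fintype_card]

lemma ncard_incidence {V : Type*} [Finite V] (G : SimpleGraph V) (v : V) :
    ({e : ↥G.edgeSet | v ∈ (e : Sym2 V)}).ncard = gdeg G v := by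
  classical
  rw [gdeg_eq_ncard, ← Nat.card_coe_set_eq]
  apply Nat.card_congr
  refine Equiv.trans ?_ (G.incidenceSetEquivNeighborSet v)
  exact { toFun := fun e => ⟨e.1.1, e.1.2, e.2⟩
          invFun := fun e => ⟨⟨e.1, e.2.1⟩, e.2.2⟩
          left_inv := fun e => rfl
          right_inv := fun e => rfl }

variable {V₁ V₂ : Type*} [Finite V₁] [Finite V₂] {G₁ : SimpleGraph V₁} {G₂ : SimpleGraph V₂}

@[simp] lemma vqj_adj_vv (v w : V₁) :
    ¬ (vertexQJoin G₁ G₂).Adj (Sum.inl (Sum.inl v)) (Sum.inl (Sum.inl w)) := fun h => h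

@[simp] lemma vqj_adj_ve (v : V₁) (e : ↥G₁.edgeSet) :
    (vertexQJoin G₁ G₂).Adj (Sum.inl (Sum.inl v)) (Sum.inl (Sum.inr e)) ↔
      v ∈ (e : Sym2 V₁) := Iff.rfl

@[simp] lemma vqj_adj_ev (v : V₁) (e : ↥G₁.edgeSet) :
    (vertexQJoin G₁ G₂).Adj (Sum.inl (Sum.inr e)) (Sum.inl (Sum.inl v)) ↔
      v ∈ (e : Sym2 V₁) := Iff.rfl

@[simp] lemma vqj_adj_ee (e f : ↥G₁.edgeSet) :
    (vertexQJoin G₁ G₂).Adj (Sum.inl (Sum.inr e)) (Sum.inl (Sum.inr f)) ↔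
      e ≠ f ∧ ∃ v, v ∈ (e : Sym2 V₁) ∧ v ∈ (f : Sym2 V₁) := Iff.rfl

@[simp] lemma vqj_adj_vr (v : V₁) (w : V₂) :
    (vertexQJoin G₁ G₂).Adj (Sum.inl (Sum.inl v)) (Sum.inr w) :=
  rfl

@[simp] lemma vqj_adj_rv (v : V₁) (w : V₂) :
    (vertexQJoin G₁ G₂).Adj (Sum.inr w) (Sum.inl (Sum.inl v)) :=
  rfl

@[simp] lemma vqj_adj_er (e : ↥G₁.edgeSet) (w : V₂) :
    ¬ (vertexQJoin G₁ G₂).Adj (Sum.inl (Sum.inr e)) (Sum.inr w) := fun h => by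
  simp [vertexQJoin, joinOn] at h

@[simp] lemma vqj_adj_re (e : ↥G₁.edgeSet) (w : V₂) :
    ¬ (vertexQJoin G₁ G₂).Adj (Sum.inr w) (Sum.inl (Sum.inr e)) := fun h => by
  simp [vertexQJoin, joinOn] at h

@[simp] lemma vqj_adj_rr (w w' : V₂) :
    (vertexQJoin G₁ G₂).Adj (Sum.inr w) (Sum.inr w') ↔ G₂.Adj w w' := Iff.rfl

lemma vqj_ns_vert (G₁ : SimpleGraph V₁) (G₂ : SimpleGraph V₂) (v : V₁) :
    (vertexQJoin G₁ G₂).neighborSet (Sum.inl (Sum.inl v)) =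
      (fun e : ↥G₁.edgeSet => (Sum.inl (Sum.inr e) : (V₁ ⊕ ↥G₁.edgeSet) ⊕ V₂)) ''
        {e : ↥G₁.edgeSet | v ∈ (e : Sym2 V₁)} ∪ Sum.inr '' Set.univ := by
  ext x
  rcases x with (w | e) | w <;> simp [SimpleGraph.mem_neighborSet]

lemma card_vqj_ns_vert (G₁ : SimpleGraph V₁) (G₂ : SimpleGraph V₂) (v : V₁) :
    Nat.card ((vertexQJoin G₁ G₂).neighborSet (Sum.inl (Sum.inl v))) =
      gdeg G₁ v + Nat.card V₂ := by
  have hdisj : Disjoint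
      ((fun e : ↥G₁.edgeSet => (Sum.inl (Sum.inr e) : (V₁ ⊕ ↥G₁.edgeSet) ⊕ V₂)) ''
        {e : ↥G₁.edgeSet | v ∈ (e : Sym2 V₁)}) (Sum.inr '' Set.univ) := by
    rw [Set.disjoint_left]
    rintro x ⟨e, -, rfl⟩ ⟨w, -, h⟩
    exact Sum.inl_ne_inr h.symm
  have hinj : Function.Injective
      (fun e : ↥G₁.edgeSet => (Sum.inl (Sum.inr e) : (V₁ ⊕ ↥G₁.edgeSet) ⊕ V₂)) :=
    fun a b h => by simpa using h
  rw [Nat.card_coe_set_eq, vqj_ns_vert, Set.ncard_union_eq hdisj (Set.toFinite _)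
    (Set.toFinite _), Set.ncard_image_of_injective _ hinj, Set.ncard_image_of_injective _
    Sum.inr_injective, Set.ncard_univ, ncard_incidence G₁ v]

lemma vqj_ns_edge (G₁ : SimpleGraph V₁) (G₂ : SimpleGraph V₂) (e : ↥G₁.edgeSet) :
    (vertexQJoin G₁ G₂).neighborSet (Sum.inl (Sum.inr e)) =
      (fun v : V₁ => (Sum.inl (Sum.inl v) : (V₁ ⊕ ↥G₁.edgeSet) ⊕ V₂)) ''
        {v : V₁ | v ∈ (e : Sym2 V₁)} ∪
      (fun f : ↥G₁.edgeSet => (Sum.inl (Sum.inr f) : (V₁ ⊕ ↥G₁.edgeSet) ⊕ V₂)) ''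
        {f : ↥G₁.edgeSet | f ≠ e ∧ ∃ v, v ∈ (e : Sym2 V₁) ∧ v ∈ (f : Sym2 V₁)} := by
  ext x
  rcases x with (w | f) | w
  · simp [SimpleGraph.mem_neighborSet]
  · simp only [SimpleGraph.mem_neighborSet, vqj_adj_ee, Set.mem_union, Set.mem_image,
      Set.mem_setOf_eq]
    constructor
    · rintro ⟨h1, v, h2, h3⟩
      exact Or.inr ⟨f, ⟨Ne.symm h1, v, h2, h3⟩, rfl⟩
    · rintro (⟨v, -, h⟩ | ⟨g, ⟨h1, v, h2, h3⟩, h4⟩)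
      · exact absurd h (by simp)
      · obtain rfl : g = f := by simpa using h4
        exact ⟨Ne.symm h1, v, h2, h3⟩
  · simp [SimpleGraph.mem_neighborSet]

lemma card_vqj_ns_edge (G₁ : SimpleGraph V₁) (G₂ : SimpleGraph V₂) (e : ↥G₁.edgeSet)
    (u w : V₁) (huv : (e : Sym2 V₁) = s(u, w)) (hne : u ≠ w) :
    Nat.card ((vertexQJoin G₁ G₂).neighborSet (Sum.inl (Sum.inr e))) =
      gdeg G₁ u + gdeg G₁ w := by
  have hA : {f : ↥G₁.edgeSet | f ≠ e ∧ ∃ v, v ∈ (e : Sym2 V₁) ∧ v ∈ (f : Sym2 V₁)} =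
      ({f : ↥G₁.edgeSet | u ∈ (f : Sym2 V₁)} ∪ {f : ↥G₁.edgeSet | w ∈ (f : Sym2 V₁)}) \ {e} := by
    ext f
    simp only [Set.mem_setOf_eq, Set.mem_diff, Set.mem_union, Set.mem_singleton_iff, huv,
      Sym2.mem_iff]
    constructor
    · rintro ⟨h1, v, (rfl | rfl), h2⟩
      exacts [⟨Or.inl h2, h1⟩, ⟨Or.inr h2, h1⟩]
    · rintro ⟨h1 | h1, h2⟩
      exacts [⟨h2, u, Or.inl rfl, h1⟩, ⟨h2, w, Or.inr rfl, h1⟩]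
  have hI : {f : ↥G₁.edgeSet | u ∈ (f : Sym2 V₁)} ∩ {f : ↥G₁.edgeSet | w ∈ (f : Sym2 V₁)}
      = {e} := by
    ext f
    simp only [Set.mem_inter_iff, Set.mem_setOf_eq, Set.mem_singleton_iff]
    constructor
    · rintro ⟨h1, h2⟩
      exact Subtype.ext (((Sym2.mem_and_mem_iff hne).mp ⟨h1, h2⟩).trans huv.symm)
    · rintro rfl
      rw [huv]
      simp
  have hU : ({f : ↥G₁.edgeSet | u ∈ (f : Sym2 V₁)} ∪
      {f : ↥G₁.edgeSet | w ∈ (f : Sym2 V₁)}).ncard + 1 = gdeg G₁ u + gdeg G₁ w := by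
    have h2 := Set.ncard_union_add_ncard_inter {f : ↥G₁.edgeSet | u ∈ (f : Sym2 V₁)}
      {f : ↥G₁.edgeSet | w ∈ (f : Sym2 V₁)} (Set.toFinite _) (Set.toFinite _)
    rw [hI, Set.ncard_singleton, ncard_incidence G₁ u, ncard_incidence G₁ w] at h2
    exact h2
  have heU : e ∈ {f : ↥G₁.edgeSet | u ∈ (f : Sym2 V₁)} ∪
      {f : ↥G₁.edgeSet | w ∈ (f : Sym2 V₁)} := by
    left; rw [Set.mem_setOf_eq, huv]; simp
  have hdiff := Set.ncard_diff_singleton_add_one heU (Set.toFinite _)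
  have hAcard : {f : ↥G₁.edgeSet | f ≠ e ∧
      ∃ v, v ∈ (e : Sym2 V₁) ∧ v ∈ (f : Sym2 V₁)}.ncard + 2 = gdeg G₁ u + gdeg G₁ w := by
    rw [hA]
    omega
  have hV : {v : V₁ | v ∈ (e : Sym2 V₁)}.ncard = 2 := by
    rw [huv]
    have h3 : {v : V₁ | v ∈ s(u, w)} = {u, w} := by ext v; simp [Sym2.mem_iff]
    rw [h3, Set.ncard_pair hne]
  have hdisj : Disjoint
      ((fun v : V₁ => (Sum.inl (Sum.inl v) : (V₁ ⊕ ↥G₁.edgeSet) ⊕ V₂)) ''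
        {v : V₁ | v ∈ (e : Sym2 V₁)})
      ((fun f : ↥G₁.edgeSet => (Sum.inl (Sum.inr f) : (V₁ ⊕ ↥G₁.edgeSet) ⊕ V₂)) ''
        {f : ↥G₁.edgeSet | f ≠ e ∧ ∃ v, v ∈ (e : Sym2 V₁) ∧ v ∈ (f : Sym2 V₁)}) := by
    rw [Set.disjoint_left]
    rintro x ⟨a, -, rfl⟩ ⟨b, -, h⟩
    simp at h
  have hinj1 : Function.Injective
      (fun v : V₁ => (Sum.inl (Sum.inl v) : (V₁ ⊕ ↥G₁.edgeSet) ⊕ V₂)) :=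
    fun a b h => by simpa using h
  have hinj2 : Function.Injective
      (fun f : ↥G₁.edgeSet => (Sum.inl (Sum.inr f) : (V₁ ⊕ ↥G₁.edgeSet) ⊕ V₂)) :=
    fun a b h => by simpa using h
  rw [Nat.card_coe_set_eq, vqj_ns_edge, Set.ncard_union_eq hdisj (Set.toFinite _)
    (Set.toFinite _), Set.ncard_image_of_injective _ hinj1, Set.ncard_image_of_injective _ hinj2,
    hV]
  omega

lemma vqj_ns_right (G₁ : SimpleGraph V₁) (G₂ : SimpleGraph V₂) (w : V₂) :
    (vertexQJoin G₁ G₂).neighborSet (Sum.inr w) =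
      (fun v : V₁ => (Sum.inl (Sum.inl v) : (V₁ ⊕ ↥G₁.edgeSet) ⊕ V₂)) '' Set.univ ∪
      Sum.inr '' G₂.neighborSet w := by
  ext x
  rcases x with (v | e) | v <;> simp [SimpleGraph.mem_neighborSet]

lemma card_vqj_ns_right (G₁ : SimpleGraph V₁) (G₂ : SimpleGraph V₂) (w : V₂) :
    Nat.card ((vertexQJoin G₁ G₂).neighborSet (Sum.inr w)) =
      Nat.card V₁ + gdeg G₂ w := by
  have hdisj : Disjoint
      ((fun v : V₁ => (Sum.inl (Sum.inl v) : (V₁ ⊕ ↥G₁.edgeSet) ⊕ V₂)) '' Set.univ)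
      (Sum.inr '' G₂.neighborSet w) := by
    rw [Set.disjoint_left]
    rintro x ⟨a, -, rfl⟩ ⟨b, -, h⟩
    exact Sum.inl_ne_inr h.symm
  have hinj : Function.Injective
      (fun v : V₁ => (Sum.inl (Sum.inl v) : (V₁ ⊕ ↥G₁.edgeSet) ⊕ V₂)) :=
    fun a b h => by simpa using h
  rw [Nat.card_coe_set_eq, vqj_ns_right, Set.ncard_union_eq hdisj (Set.toFinite _)
    (Set.toFinite _), Set.ncard_image_of_injective _ hinj, Set.ncard_image_of_injective _
    Sum.inr_injective, Set.ncard_univ, gdeg_eq_ncard, Nat.card_coe_set_eq]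

end AuxFindex


lemma Findex_eq_sum {V : Type*} [Fintype V] (G : SimpleGraph V) :
    Findex G = ∑ v : V, gdeg G v ^ 3 := by
  unfold Findex
  exact Finset.sum_congr (by congr 1; exact Subsingleton.elim _ _) fun _ _ => rfl

theorem Findex_vertexQJoin_ex16 (n m : ℕ) (hn : 3 ≤ n) (hm : 3 ≤ m) :
    (Findex (vertexQJoin (SimpleGraph.cycleGraph n) (SimpleGraph.cycleGraph m)) : ℤ) =
      (m : ℤ) * (n : ℤ) * ((m : ℤ) ^ 2 + (n : ℤ) ^ 2) + 6 * (m : ℤ) * (n : ℤ) * ((m : ℤ) + (n : ℤ)) + 24 * (m : ℤ) * (n : ℤ) + 8 * (m : ℤ) + 72 * (n : ℤ) := by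
  obtain ⟨n', rfl⟩ : ∃ n', n = n' + 3 := ⟨n - 3, by omega⟩
  obtain ⟨m', rfl⟩ : ∃ m', m = m' + 3 := ⟨m - 3, by omega⟩
  classical
  set G₁ := SimpleGraph.cycleGraph (n' + 3) with hG₁
  set G₂ := SimpleGraph.cycleGraph (m' + 3) with hG₂
  have hd1 : ∀ v : Fin (n' + 3), gdeg G₁ v = 2 := fun v => by
    rw [gdeg_eq_degree]; exact SimpleGraph.cycleGraph_degree_three_le
  have hd2 : ∀ v : Fin (m' + 3), gdeg G₂ v = 2 := fun v => by
    rw [gdeg_eq_degree]; exact SimpleGraph.cycleGraph_degree_three_le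
  have hE : Fintype.card ↥G₁.edgeSet = n' + 3 := by
    have h2 := G₁.sum_degrees_eq_twice_card_edges
    have h3 : ∀ v : Fin (n' + 3), G₁.degree v = 2 := fun v =>
      SimpleGraph.cycleGraph_degree_three_le
    rw [Finset.sum_congr rfl fun v _ => h3 v, Finset.sum_const, Finset.card_univ,
      Fintype.card_fin, smul_eq_mul] at h2
    have h4 : G₁.edgeFinset.card = Fintype.card ↥G₁.edgeSet := SimpleGraph.edgeFinset_card
    omega
  have hgv : ∀ v : Fin (n' + 3),
      gdeg (vertexQJoin G₁ G₂) (Sum.inl (Sum.inl v)) = m' + 5 := fun v => by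
    rw [gdeg_eq_ncard, card_vqj_ns_vert, hd1 v, Nat.card_eq_fintype_card, Fintype.card_fin]
    omega
  have hge : ∀ e : ↥G₁.edgeSet,
      gdeg (vertexQJoin G₁ G₂) (Sum.inl (Sum.inr e)) = 4 := by
    rintro ⟨st, hs⟩
    induction st using Sym2.ind with
    | _ u w =>
      have hadj : G₁.Adj u w := (SimpleGraph.mem_edgeSet G₁).mp hs
      rw [gdeg_eq_ncard, card_vqj_ns_edge G₁ G₂ ⟨s(u, w), hs⟩ u w rfl hadj.ne,
        hd1 u, hd1 w]
  have hgr : ∀ w : Fin (m' + 3),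
      gdeg (vertexQJoin G₁ G₂) (Sum.inr w) = n' + 5 := fun w => by
    rw [gdeg_eq_ncard, card_vqj_ns_right, hd2 w, Nat.card_eq_fintype_card, Fintype.card_fin]
  rw [Findex_eq_sum, Fintype.sum_sum_type, Fintype.sum_sum_type]
  simp only [hgv, hge, hgr, Finset.sum_const, Finset.card_univ, Fintype.card_fin, hE,
    smul_eq_mul]
  push_cast
  ring
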